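/- arXiv:2211.00574 — 2 statements merged into one kernel-verified Lean document; each statement's English description precedes it below -/
import Mathlib

section
/- For every d ≥ 3, let K be the pure (d−1)-dimensional simplicial complex on d+4 vertices obtained from the complete bipartite graph K_{3,3} — viewed as the 1-dimensional simplicial complex on {1,…,6} whose faces are the empty set, the singletons, and the edges {i,j} with i ∈ {1,2,3} and j ∈ {4,5,6} — by iterating the cone operation d−2 times, each time adding a new apex vertex. Then K is (d−1, d²−d−1)-sparse. -/
open scoped BigOperators

section Defs

variable {α : Type*}

/-- A family of finite sets is a simplicial complex if it is closed under taking subsets. -/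
def IsComplex (K : Finset (Finset α)) : Prop :=
  ∀ σ ∈ K, ∀ τ ⊆ σ, τ ∈ K

/-- `K` is pure with all facets of cardinality `d` (i.e. pure `(d-1)`-dimensional). -/
def PureCx (d : ℕ) (K : Finset (Finset α)) : Prop :=
  (∀ σ ∈ K, σ.card ≤ d) ∧ ∀ σ ∈ K, ∃ τ ∈ K, σ ⊆ τ ∧ τ.card = d

/-- `K` is `(d-1)`-dimensional: the largest faces have `d` elements. -/
def DimPred (d : ℕ) (K : Finset (Finset α)) : Prop :=
  (∀ σ ∈ K, σ.card ≤ d) ∧ ∃ σ ∈ K, σ.card = d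

/-- The increasing embedding of `Fin (d-1)` into `Fin d` skipping `r`. -/
def skipF {d : ℕ} (r : Fin d) (k : Fin (d - 1)) : Fin d :=
  if (k : ℕ) < (r : ℕ) then ⟨(k : ℕ), by have := k.isLt; omega⟩
  else ⟨(k : ℕ) + 1, by have := k.isLt; omega⟩

/-- The cofactor `C_{r,c}(M)` (0-indexed). -/
noncomputable def cofactor {d : ℕ} (M : Matrix (Fin d) (Fin d) ℝ) (r c : Fin d) : ℝ :=
  (-1 : ℝ) ^ ((r : ℕ) + (c : ℕ)) * (M.submatrix (skipF r) (skipF c)).det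

/-- The matrix `M_{p,σ}` whose `j`-th column is `(p(v_j), 1)`, `v_j` the `j`-th smallest
element of `σ`. -/
noncomputable def faceMat [LinearOrder α] (d : ℕ) (p : α → Fin (d - 1) → ℝ)
    (σ : Finset α) (hσ : σ.card = d) : Matrix (Fin d) (Fin d) ℝ :=
  fun i j => if h : (i : ℕ) < d - 1 then p (σ.orderEmbOfFin hσ j) ⟨i, h⟩ else 1

/-- The volume-rigidity matrix `𝔙(K,p)`. -/
noncomputable def volMatrix [LinearOrder α] (d : ℕ) (K : Finset (Finset α))
    (p : α → Fin (d - 1) → ℝ) :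
    Matrix (α × Fin (d - 1)) {σ : Finset α // σ ∈ K ∧ σ.card = d} ℝ :=
  fun vi σ =>
    if h : vi.1 ∈ σ.1 then
      cofactor (faceMat d p σ.1 σ.2.2) (Fin.castLE (Nat.sub_le d 1) vi.2)
        ((σ.1.orderIsoOfFin σ.2.2).symm ⟨vi.1, h⟩)
    else 0

/-- `p : V → ℝ^{d-1}` is generic: its coordinates are algebraically independent over `ℚ`. -/
def GenericEmb (d : ℕ) (V : Finset α) (p : α → Fin (d - 1) → ℝ) : Prop :=
  AlgebraicIndependent ℚ (fun x : {a // a ∈ V} × Fin (d - 1) => p x.1.1 x.2)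

/-- `K`, with vertex set `V`, is volume-rigid. -/
def VolumeRigid [Fintype α] [LinearOrder α] (d : ℕ) (V : Finset α)
    (K : Finset (Finset α)) : Prop :=
  ∀ p : α → Fin (d - 1) → ℝ, GenericEmb d V p →
    (volMatrix d K p).rank = (d - 1) * V.card - (d ^ 2 - d - 1)

/-- `sign(τ,σ) = (-1)^j` where the unique element of `σ \ τ` is the `j`-th smallest
element of `σ` (1-based). -/
def faceSgn [LinearOrder α] (τ σ : Finset α) : ℤ :=
  if h : (σ \ τ).card = 1 then
    (-1 : ℤ) ^
      (((σ.sort (· ≤ ·)).idxOf ((σ \ τ).min' (Finset.card_pos.mp (by omega)))) + 1)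
  else 0

/-- The boundary of the integral `(d-1)`-chain `z` of `K` vanishes. -/
def BoundaryZeroZ [LinearOrder α] (d : ℕ) (K : Finset (Finset α)) (z : Finset α → ℤ) : Prop :=
  ∀ τ : Finset α, τ.card = d - 1 →
    ∑ σ ∈ K.filter (fun σ => σ.card = d ∧ τ ⊆ σ), faceSgn τ σ * z σ = 0

/-- The boundary of the real `(d-1)`-chain `z` of `K` vanishes. -/
def BoundaryZeroR [LinearOrder α] (d : ℕ) (K : Finset (Finset α)) (z : Finset α → ℝ) : Prop :=
  ∀ τ : Finset α, τ.card = d - 1 →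
    ∑ σ ∈ K.filter (fun σ => σ.card = d ∧ τ ⊆ σ), (faceSgn τ σ : ℝ) * z σ = 0

/-- `K` is a minimal cycle over `ℤ`. -/
def IsMinimalCycleZ [LinearOrder α] (d : ℕ) (K : Finset (Finset α)) : Prop :=
  (∃ z : Finset α → ℤ, (∀ σ, ¬(σ ∈ K ∧ σ.card = d) → z σ = 0) ∧
      BoundaryZeroZ d K z ∧ ∀ σ ∈ K, σ.card = d → z σ ≠ 0) ∧
  ∀ z : Finset α → ℤ, (∀ σ, ¬(σ ∈ K ∧ σ.card = d) → z σ = 0) →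
    BoundaryZeroZ d K z → z ≠ 0 → ∀ σ ∈ K, σ.card = d → z σ ≠ 0

/-- `K` is `(d-1, d²-d-1)`-sparse on vertex set `V`. -/
def Sparse [DecidableEq α] (d : ℕ) (V : Finset α) (K : Finset (Finset α)) : Prop :=
  ∀ A ⊆ V, d ≤ A.card →
    (K.filter (fun σ => σ.card = d ∧ σ ⊆ A)).card ≤ (d - 1) * A.card - (d ^ 2 - d - 1)

/-- `K` is `(d-1, d²-d-1)`-tight on vertex set `V`. -/
def Tight [DecidableEq α] (d : ℕ) (V : Finset α) (K : Finset (Finset α)) : Prop :=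
  Sparse d V K ∧
    (K.filter (fun σ => σ.card = d)).card = (d - 1) * V.card - (d ^ 2 - d - 1)

end Defs

section Shifting

/-- The partial order `σ ≤_p τ`: equal cardinalities and the `i`-th smallest element of `σ`
is at most the `i`-th smallest element of `τ`, for every `i`. -/
def pLE {n : ℕ} (σ τ : Finset (Fin n)) : Prop :=
  List.Forall₂ (· ≤ ·) (σ.sort (· ≤ ·)) (τ.sort (· ≤ ·))

/-- The strict partial order `σ <_p τ`. -/
def pLT {n : ℕ} (σ τ : Finset (Fin n)) : Prop := pLE σ τ ∧ σ ≠ τ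

/-- `f_σ = f_{σ_1} ∧ ⋯ ∧ f_{σ_k}` in the exterior algebra of `ℝ^n`. -/
noncomputable def extWedge {n : ℕ} (f : Fin n → (Fin n → ℝ)) (σ : Finset (Fin n)) :
    ExteriorAlgebra ℝ (Fin n → ℝ) :=
  ((σ.sort (· ≤ ·)).map (fun i => ExteriorAlgebra.ι ℝ (f i))).prod

/-- The standard basis of `ℝ^n`. -/
noncomputable def stdVec (n : ℕ) : Fin n → (Fin n → ℝ) := fun i => Pi.single i 1

/-- The subspace spanned by `{e_τ : τ ∉ K, |τ| = k}`. -/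
noncomputable def faceIdeal {n : ℕ} (K : Finset (Finset (Fin n))) (k : ℕ) :
    Submodule ℝ (ExteriorAlgebra ℝ (Fin n → ℝ)) :=
  Submodule.span ℝ
    {x | ∃ τ : Finset (Fin n), τ ∉ K ∧ τ.card = k ∧ x = extWedge (stdVec n) τ}

/-- The quotient map `q`. -/
noncomputable def qMap {n : ℕ} (K : Finset (Finset (Fin n))) (k : ℕ) :
    ExteriorAlgebra ℝ (Fin n → ℝ) → ExteriorAlgebra ℝ (Fin n → ℝ) ⧸ faceIdeal K k :=
  fun x => Submodule.Quotient.mk x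

/-- The shifted family `Δ^<(K)` associated with a strict order `lt` on subsets of `[n]`,
computed with respect to the basis `f`. -/
def DeltaLt {n : ℕ} (K : Finset (Finset (Fin n))) (f : Fin n → (Fin n → ℝ))
    (lt : Finset (Fin n) → Finset (Fin n) → Prop) : Set (Finset (Fin n)) :=
  {σ | qMap K σ.card (extWedge f σ) ∉
    Submodule.span ℝ (qMap K σ.card '' (extWedge f '' {τ | lt τ σ ∧ τ.card = σ.card}))}

/-- `Δ^p(K)`, computed with respect to the basis `f`. -/
def DeltaP {n : ℕ} (K : Finset (Finset (Fin n))) (f : Fin n → (Fin n → ℝ)) :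
    Set (Finset (Fin n)) := DeltaLt K f pLT

/-- `f` is a generic basis of `ℝ^n`: it is a basis, `f_1 = (1,…,1)`, and the coordinates of
`f_2, …, f_n` are algebraically independent over `ℚ`. -/
def GenericBasis {n : ℕ} (f : Fin n → (Fin n → ℝ)) : Prop :=
  (∃ b : Module.Basis (Fin n) ℝ (Fin n → ℝ), ⇑b = f) ∧
  (∀ i : Fin n, (i : ℕ) = 0 → f i = 1) ∧
  AlgebraicIndependent ℚ (fun x : {i : Fin n // (i : ℕ) ≠ 0} × Fin n => f x.1.1 x.2)

/-- The set `{1,3,4,…,d,n}` (1-based), i.e. `{0,2,3,…,d-1,n-1}` as a subset of `Fin n`. -/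
def sigma0 (d n : ℕ) : Finset (Fin n) :=
  Finset.univ.filter (fun i : Fin n =>
    (i : ℕ) = 0 ∨ (2 ≤ (i : ℕ) ∧ (i : ℕ) + 1 ≤ d) ∨ (i : ℕ) + 1 = n)

end Shifting

/-- The complete bipartite graph `K_{3,3}` as a 1-dimensional simplicial complex on the first
six elements of `Fin m` (0-based: parts `{0,1,2}` and `{3,4,5}`). -/
def K33 (m : ℕ) : Finset (Finset (Fin m)) :=
  Finset.univ.filter (fun σ : Finset (Fin m) =>
    σ = ∅ ∨ (∃ i : Fin m, (i : ℕ) < 6 ∧ σ = {i}) ∨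
      (∃ i j : Fin m, (i : ℕ) < 3 ∧ 3 ≤ (j : ℕ) ∧ (j : ℕ) < 6 ∧ σ = {i, j}))

/-- The cone over `K` with apex `v`. -/
def coneCx {α : Type*} [DecidableEq α] (v : α) (K : Finset (Finset α)) :
    Finset (Finset α) :=
  K ∪ K.image (insert v)

/-- The complex on `d+4` vertices obtained from `K_{3,3}` by iterating the cone operation
`d-2` times, each time adding a new apex vertex (the apexes being `6,7,…,d+3`). -/
def iteratedConeK33 (d : ℕ) : Finset (Finset (Fin (d + 4))) :=
  (((Finset.univ : Finset (Fin (d + 4))).filter (fun v : Fin (d + 4) => 6 ≤ (v : ℕ))).sort (· ≤ ·)).foldl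
    (fun Kc v => coneCx v Kc) (K33 (d + 4))


section AuxSparse

open Finset

variable {β : Type*} [DecidableEq β]

lemma mem_coneCx {v : β} {K : Finset (Finset β)} {σ : Finset β} :
    σ ∈ coneCx v K ↔ σ ∈ K ∨ ∃ ρ ∈ K, σ = insert v ρ := by
  simp [coneCx, eq_comm]

lemma mem_foldl_cone (l : List β) (K : Finset (Finset β)) (σ : Finset β) :
    σ ∈ l.foldl (fun Kc v => coneCx v Kc) K ↔
      ∃ τ ∈ K, ∃ S : Finset β, S ⊆ l.toFinset ∧ σ = τ ∪ S := by
  induction l generalizing K with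
  | nil =>
    simp only [List.foldl_nil, List.toFinset_nil]
    constructor
    · intro h; exact ⟨σ, h, ∅, by simp⟩
    · rintro ⟨τ, hτ, S, hS, rfl⟩
      have : S = ∅ := subset_empty.mp hS
      subst this; simpa using hτ
  | cons v l ih =>
    rw [List.foldl_cons, ih]
    constructor
    · rintro ⟨τ, hτ, S, hS, rfl⟩
      rcases mem_coneCx.mp hτ with h | ⟨ρ, hρ, rfl⟩
      · refine ⟨τ, h, S, hS.trans ?_, rfl⟩
        simp only [List.toFinset_cons]
        exact subset_insert _ _
      · refine ⟨ρ, hρ, insert v S, ?_, ?_⟩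
        · simp only [List.toFinset_cons]
          exact insert_subset_insert _ hS
        · rw [insert_union, union_insert]
    · rintro ⟨τ, hτ, S, hS, rfl⟩
      simp only [List.toFinset_cons] at hS
      by_cases hv : v ∈ S
      · refine ⟨insert v τ, mem_coneCx.mpr (Or.inr ⟨τ, hτ, rfl⟩), S.erase v, ?_, ?_⟩
        · intro x hx
          obtain ⟨hxv, hxS⟩ := mem_erase.mp hx
          rcases mem_insert.mp (hS hxS) with h | h
          · exact absurd h hxv
          · exact h
        · rw [insert_union, ← union_insert, insert_erase hv]
      · refine ⟨τ, mem_coneCx.mpr (Or.inl hτ), S, ?_, rfl⟩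
        intro x hx
        rcases mem_insert.mp (hS hx) with h | h
        · subst h; exact absurd hx hv
        · exact h

/-- The set of apexes. -/
def apexSet (d : ℕ) : Finset (Fin (d + 4)) :=
  Finset.univ.filter (fun v => 6 ≤ (v : ℕ))

lemma card_filter_Ico (n a b : ℕ) (hb : b ≤ n) :
    ((Finset.univ : Finset (Fin n)).filter
      (fun v : Fin n => a ≤ (v : ℕ) ∧ (v : ℕ) < b)).card = b - a := by
  rw [← Nat.card_Ico a b]
  apply Finset.card_bij (fun (v : Fin n) _ => (v : ℕ))
  · intro v hv
    simp only [mem_filter, mem_univ, true_and] at hv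
    simpa [Finset.mem_Ico] using hv
  · intro x hx y hy h
    exact Fin.val_injective h
  · intro m hm
    rw [Finset.mem_Ico] at hm
    exact ⟨⟨m, lt_of_lt_of_le hm.2 hb⟩, by simp [hm.1, hm.2], rfl⟩

lemma apexSet_card (d : ℕ) (hd : 3 ≤ d) : (apexSet d).card = d - 2 := by
  unfold apexSet
  have h : (Finset.univ.filter (fun v : Fin (d + 4) => 6 ≤ (v : ℕ)))
      = Finset.univ.filter (fun v : Fin (d + 4) => 6 ≤ (v : ℕ) ∧ (v : ℕ) < d + 4) := by
    apply filter_congr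
    intro v _
    simp [v.isLt]
  rw [h, card_filter_Ico (d + 4) 6 (d + 4) le_rfl]
  omega

lemma facet_iff (d : ℕ) (hd : 3 ≤ d) (σ : Finset (Fin (d + 4))) :
    (σ ∈ iteratedConeK33 d ∧ σ.card = d) ↔
      ∃ i j : Fin (d + 4), (i : ℕ) < 3 ∧ 3 ≤ (j : ℕ) ∧ (j : ℕ) < 6 ∧
        σ = {i, j} ∪ apexSet d := by
  have hApex := apexSet_card d hd
  constructor
  · rintro ⟨hmem, hcard⟩
    unfold iteratedConeK33 at hmem
    rw [mem_foldl_cone] at hmem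
    obtain ⟨τ, hτ, S, hSsub, rfl⟩ := hmem
    rw [Finset.sort_toFinset] at hSsub
    have hSsub' : S ⊆ apexSet d := hSsub
    have hτ' := (Finset.mem_filter.mp hτ).2
    have hτle : τ.card ≤ 2 := by
      rcases hτ' with rfl | ⟨i, _, rfl⟩ | ⟨i, j, _, _, _, rfl⟩
      · simp
      · simp
      · exact (card_insert_le _ _).trans (by simp)
    have hSle : S.card ≤ d - 2 := hApex ▸ card_le_card hSsub'
    have hun : (τ ∪ S).card ≤ τ.card + S.card := card_union_le _ _
    have hτ2 : τ.card = 2 := by omega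
    have hS2 : (apexSet d).card ≤ S.card := by omega
    have hSA : S = apexSet d := Finset.eq_of_subset_of_card_le hSsub' hS2
    rcases hτ' with rfl | ⟨i, _, rfl⟩ | ⟨i, j, hi, hj1, hj2, rfl⟩
    · simp at hτ2
    · simp at hτ2
    · exact ⟨i, j, hi, hj1, hj2, by rw [hSA]⟩
  · rintro ⟨i, j, hi, hj1, hj2, rfl⟩
    have hij : i ≠ j := by
      intro h
      rw [h] at hi
      omega
    have hdisj : Disjoint ({i, j} : Finset (Fin (d + 4))) (apexSet d) := by
      rw [Finset.disjoint_left]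
      intro x hx hx2
      have h6 : 6 ≤ (x : ℕ) := (Finset.mem_filter.mp hx2).2
      rcases Finset.mem_insert.mp hx with rfl | hx'
      · omega
      · have hxe := Finset.mem_singleton.mp hx'
        subst hxe
        omega
    constructor
    · unfold iteratedConeK33
      rw [mem_foldl_cone]
      refine ⟨{i, j}, ?_, apexSet d, ?_, rfl⟩
      · simp only [K33, Finset.mem_filter, Finset.mem_univ, true_and]
        exact Or.inr (Or.inr ⟨i, j, hi, hj1, hj2, rfl⟩)
      · rw [Finset.sort_toFinset]
        exact fun x hx => hx
    · rw [card_union_of_disjoint hdisj, hApex,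
        card_insert_of_notMem (by simp [hij]), card_singleton]
      omega

lemma sparse_arith (d p q a : ℕ) (hd : 3 ≤ d) (hp : p ≤ 3) (hq : q ≤ 3)
    (hs : 2 ≤ p + q) (ha : a = p + q + (d - 2)) :
    p * q ≤ (d - 1) * a - (d ^ 2 - d - 1) := by
  obtain ⟨k, rfl⟩ := Nat.exists_eq_add_of_le hd
  apply Nat.le_sub_of_add_le
  have h1 : (3 + k) ^ 2 - (3 + k) - 1 = k * k + 5 * k + 5 := by
    have h : (3 + k) ^ 2 = (k * k + 5 * k + 5 + 1) + (3 + k) := by ring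
    rw [h, Nat.add_sub_cancel, Nat.add_sub_cancel]
  have h2 : a = p + q + (k + 1) := by omega
  have h3 : 3 + k - 1 = k + 2 := by omega
  rw [h1, h2, h3]
  have key : p * q + (2 * k + 3) ≤ (k + 2) * (p + q) := by
    interval_cases p <;> interval_cases q <;> omega
  calc p * q + (k * k + 5 * k + 5)
      = (p * q + (2 * k + 3)) + (k * k + 3 * k + 2) := by ring
    _ ≤ (k + 2) * (p + q) + (k * k + 3 * k + 2) := Nat.add_le_add_right key _
    _ = (k + 2) * (p + q + (k + 1)) := by ring

end AuxSparse

/-- part of the proof of Corollary 1.4: the `(d-2)`-fold cone over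
`K_{3,3}` is `(d-1, d²-d-1)`-sparse. -/
theorem iteratedConeK33_sparse (d : ℕ) (hd : 3 ≤ d) :
    ∀ A : Finset (Fin (d + 4)), d ≤ A.card →
      ((iteratedConeK33 d).filter (fun σ => σ.card = d ∧ σ ⊆ A)).card ≤
        (d - 1) * A.card - (d ^ 2 - d - 1) := by

  intro A hA
  classical
  by_cases hAp : apexSet d ⊆ A
  · set P1 := A.filter (fun v : Fin (d + 4) => (v : ℕ) < 3) with hP1
    set P2 := A.filter (fun v : Fin (d + 4) => 3 ≤ (v : ℕ) ∧ (v : ℕ) < 6) with hP2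
    have himg : (iteratedConeK33 d).filter (fun σ => σ.card = d ∧ σ ⊆ A) ⊆
        (P1 ×ˢ P2).image (fun ij : Fin (d + 4) × Fin (d + 4) => {ij.1, ij.2} ∪ apexSet d) := by
      intro σ hσ
      rw [Finset.mem_filter] at hσ
      obtain ⟨hσK, hc, hsub⟩ := hσ
      obtain ⟨i, j, hi, hj1, hj2, rfl⟩ := (facet_iff d hd σ).mp ⟨hσK, hc⟩
      apply Finset.mem_image.mpr
      refine ⟨(i, j), ?_, rfl⟩
      rw [Finset.mem_product]
      constructor
      · rw [hP1, Finset.mem_filter]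
        exact ⟨hsub (Finset.mem_union_left _ (Finset.mem_insert_self i {j})), hi⟩
      · rw [hP2, Finset.mem_filter]
        exact ⟨hsub (Finset.mem_union_left _
          (Finset.mem_insert_of_mem (Finset.mem_singleton_self j))), hj1, hj2⟩
    have hle : ((iteratedConeK33 d).filter (fun σ => σ.card = d ∧ σ ⊆ A)).card ≤
        P1.card * P2.card := by
      calc ((iteratedConeK33 d).filter (fun σ => σ.card = d ∧ σ ⊆ A)).card
          ≤ ((P1 ×ˢ P2).image (fun ij : Fin (d + 4) × Fin (d + 4) => {ij.1, ij.2} ∪ apexSet d)).card :=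
            Finset.card_le_card himg
        _ ≤ (P1 ×ˢ P2).card := Finset.card_image_le
        _ = P1.card * P2.card := Finset.card_product _ _
    have hp3 : P1.card ≤ 3 := by
      have hsub1 : P1 ⊆ Finset.univ.filter
          (fun v : Fin (d + 4) => 0 ≤ (v : ℕ) ∧ (v : ℕ) < 3) := by
        intro x hx
        rw [hP1, Finset.mem_filter] at hx
        rw [Finset.mem_filter]
        exact ⟨Finset.mem_univ _, Nat.zero_le _, hx.2⟩
      have := Finset.card_le_card hsub1
      rwa [card_filter_Ico (d + 4) 0 3 (by omega)] at this
    have hq3 : P2.card ≤ 3 := by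
      have hsub2 : P2 ⊆ Finset.univ.filter
          (fun v : Fin (d + 4) => 3 ≤ (v : ℕ) ∧ (v : ℕ) < 6) := by
        intro x hx
        rw [hP2, Finset.mem_filter] at hx
        rw [Finset.mem_filter]
        exact ⟨Finset.mem_univ _, hx.2⟩
      have := Finset.card_le_card hsub2
      rwa [card_filter_Ico (d + 4) 3 6 (by omega)] at this
    have hAcard : A.card = P1.card + P2.card + (d - 2) := by
      have e1 := Finset.card_filter_add_card_filter_not
        (s := A) (p := fun v : Fin (d + 4) => (v : ℕ) < 3)
      have e2 := Finset.card_filter_add_card_filter_not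
        (s := A.filter (fun v : Fin (d + 4) => ¬ (v : ℕ) < 3))
        (p := fun v : Fin (d + 4) => (v : ℕ) < 6)
      have e3 : (A.filter (fun v : Fin (d + 4) => ¬ (v : ℕ) < 3)).filter
          (fun v : Fin (d + 4) => (v : ℕ) < 6) = P2 := by
        rw [Finset.filter_filter, hP2]
        apply Finset.filter_congr
        intro v _
        constructor
        · rintro ⟨h1, h2⟩; omega
        · rintro ⟨h1, h2⟩; exact ⟨by omega, h2⟩
      have e4 : (A.filter (fun v : Fin (d + 4) => ¬ (v : ℕ) < 3)).filter
          (fun v : Fin (d + 4) => ¬ (v : ℕ) < 6) = apexSet d := by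
        rw [Finset.filter_filter]
        ext x
        rw [Finset.mem_filter]
        unfold apexSet
        rw [Finset.mem_filter]
        constructor
        · rintro ⟨_, h1, h2⟩
          exact ⟨Finset.mem_univ _, by omega⟩
        · rintro ⟨_, h⟩
          exact ⟨hAp (Finset.mem_filter.mpr ⟨Finset.mem_univ _, h⟩), by omega, by omega⟩
      rw [e3, e4, apexSet_card d hd] at e2
      rw [← hP1] at e1
      omega
    have hpq : 2 ≤ P1.card + P2.card := by omega
    calc ((iteratedConeK33 d).filter (fun σ => σ.card = d ∧ σ ⊆ A)).card
        ≤ P1.card * P2.card := hle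
      _ ≤ (d - 1) * A.card - (d ^ 2 - d - 1) :=
          sparse_arith d P1.card P2.card A.card hd hp3 hq3 hpq hAcard
  · have hT : (iteratedConeK33 d).filter (fun σ => σ.card = d ∧ σ ⊆ A) = ∅ := by
      rw [Finset.filter_eq_empty_iff]
      intro σ hσ
      rintro ⟨hc, hsubA⟩
      obtain ⟨i, j, hi, hj1, hj2, rfl⟩ := (facet_iff d hd σ).mp ⟨hσ, hc⟩
      exact hAp ((Finset.subset_union_right).trans hsubA)
    rw [hT]
    simp
end

section
/- Let d ≥ 2, let K be a (d−1)-dimensional simplicial complex on [n], let p : [n] → ℝ^{d−1} be any map, let A be a real (d−1)×(d−1) matrix with trace 0, and let u ∈ ℝ^{d−1}. Define z ∈ ℝ^{(d−1)n} by z_{(v,i)} = (A·p(v) + u)_i for v ∈ [n] and i ∈ {1,…,d−1}. Then zᵀ·𝔙(K,p) = 0, i.e., z lies in the left kernel of the volume-rigidity matrix: for every (d−1)-face σ of K, Σ_{(v,i)} z_{(v,i)}·𝔙(K,p)_{(v,i),σ} = 0. -/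
open scoped BigOperators

lemma skipF_eq_succAbove {m : ℕ} (r : Fin (m+1)) (k : Fin m) :
    skipF r k = r.succAbove k := by
  by_cases h : (k : ℕ) < (r : ℕ)
  · rw [Fin.succAbove_of_castSucc_lt _ _ (by simpa [Fin.lt_def] using h)]
    simp only [skipF, if_pos h]; rfl
  · rw [Fin.succAbove_of_le_castSucc _ _ (by simp [Fin.le_def]; omega)]
    simp only [skipF, if_neg h]; rfl

lemma cofactor_eq_adjugate {m : ℕ} (M : Matrix (Fin (m+1)) (Fin (m+1)) ℝ) (r c : Fin (m+1)) :
    cofactor M r c = M.adjugate c r := by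
  rw [Matrix.adjugate_fin_succ_eq_det_submatrix]
  unfold cofactor
  congr 2 <;> funext k <;> exact skipF_eq_succAbove _ _

lemma sum_mul_cofactor {m : ℕ} (M : Matrix (Fin (m+1)) (Fin (m+1)) ℝ) (k i : Fin (m+1)) :
    ∑ j, M k j * cofactor M i j = if k = i then M.det else 0 := by
  simp_rw [cofactor_eq_adjugate]
  have := congrFun (congrFun (Matrix.mul_adjugate M) k) i
  rw [Matrix.mul_apply] at this
  simpa [Matrix.one_apply] using this

/-- the trivial left kernel of the volume-rigidity matrix: for any traceless
`(d-1)×(d-1)` matrix `A` and any `u ∈ ℝ^{d-1}`, the vector `z_{(v,i)} = (A·p(v) + u)_i` lies in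
the left kernel of `𝔙(K,p)`. -/
theorem trivial_left_kernel (d n : ℕ) (hd : 2 ≤ d)
    (K : Finset (Finset (Fin n))) (hK : IsComplex K) (hdim : DimPred d K)
    (p : Fin n → Fin (d - 1) → ℝ)
    (A : Matrix (Fin (d - 1)) (Fin (d - 1)) ℝ) (hA : A.trace = 0)
    (u : Fin (d - 1) → ℝ) :
    ∀ σ : {σ : Finset (Fin n) // σ ∈ K ∧ σ.card = d},
      ∑ vi : Fin n × Fin (d - 1),
        (A.mulVec (p vi.1) + u) vi.2 * volMatrix d K p vi σ = 0 := by
  obtain ⟨m, rfl⟩ : ∃ m, d = m + 1 := ⟨d - 1, by omega⟩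
  rintro ⟨σ, hσK, hc⟩
  set emb := σ.orderEmbOfFin hc with hemb
  set M := faceMat (m+1) p σ hc with hM
  rw [Fintype.sum_prod_type]
  show ∑ v : Fin n, ∑ i : Fin m,
      (A.mulVec (p v) + u) i * volMatrix (m+1) K p (v, i) ⟨σ, hσK, hc⟩ = 0
  have h1 : ∀ v ∈ Finset.univ, v ∉ σ →
      ∑ i : Fin m, (A.mulVec (p v) + u) i * volMatrix (m+1) K p (v, i) ⟨σ, hσK, hc⟩ = 0 := by
    intro v _ hv
    simp [volMatrix, hv]
  rw [← Finset.sum_subset (Finset.subset_univ σ) h1]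
  have himg : Finset.image emb Finset.univ = σ := by
    ext x
    simp only [Finset.mem_image, Finset.mem_univ, true_and]
    constructor
    · rintro ⟨j, rfl⟩; exact σ.orderEmbOfFin_mem hc j
    · intro hx
      have : x ∈ Set.range emb := by
        rw [hemb, Finset.range_orderEmbOfFin]; exact hx
      obtain ⟨j, hj⟩ := this
      exact ⟨j, hj⟩
  rw [show (∑ x ∈ σ, ∑ i : Fin m,
        (A.mulVec (p x) + u) i * volMatrix (m+1) K p (x, i) ⟨σ, hσK, hc⟩)
      = ∑ x ∈ Finset.image emb Finset.univ, ∑ i : Fin m,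
        (A.mulVec (p x) + u) i * volMatrix (m+1) K p (x, i) ⟨σ, hσK, hc⟩ from by
      rw [himg]]
  rw [Finset.sum_image (fun a _ b _ h => emb.injective h)]
  have hvmem : ∀ j : Fin (m+1), emb j ∈ σ := fun j => σ.orderEmbOfFin_mem hc j
  have hsymm : ∀ j : Fin (m+1), (σ.orderIsoOfFin hc).symm ⟨emb j, hvmem j⟩ = j := by
    intro j
    apply (σ.orderIsoOfFin hc).injective
    rw [OrderIso.apply_symm_apply]
    rfl
  have hvol : ∀ (j : Fin (m+1)) (i : Fin m),
      volMatrix (m+1) K p (emb j, i) ⟨σ, hσK, hc⟩ = cofactor M i.castSucc j := by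
    intro j i
    simp only [volMatrix]
    rw [dif_pos (hvmem j)]
    rw [hsymm j]
    rfl
  have hMrow : ∀ (k : Fin m) (j : Fin (m+1)), M k.castSucc j = p (emb j) k := by
    intro k j; simp [hM, faceMat]; rfl
  have hMlast : ∀ j : Fin (m+1), M (Fin.last m) j = 1 := by
    intro j; simp [hM, faceMat]
  have hz : ∀ (j : Fin (m+1)) (i : Fin m),
      (A.mulVec (p (emb j)) + u) i
        = (∑ k : Fin m, A i k * M k.castSucc j) + u i * M (Fin.last m) j := by
    intro j i
    simp [Matrix.mulVec, dotProduct, hMrow, hMlast]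
  simp_rw [hvol, hz, add_mul, Finset.sum_add_distrib]
  have T1 : ∑ j : Fin (m+1), ∑ i : Fin m,
      (∑ k : Fin m, A i k * M k.castSucc j) * cofactor M i.castSucc j = 0 := by
    simp_rw [Finset.sum_mul, mul_assoc]
    rw [Finset.sum_comm]
    rw [Finset.sum_congr rfl fun i _ => Finset.sum_comm]
    simp_rw [← Finset.mul_sum, sum_mul_cofactor, Fin.castSucc_inj, mul_ite, mul_zero,
      Finset.sum_ite_eq', Finset.mem_univ, if_true]
    rw [← Finset.sum_mul]
    have : ∑ i : Fin m, A i i = A.trace := by simp [Matrix.trace, Matrix.diag]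
    rw [this, hA, zero_mul]
  have T2 : ∑ j : Fin (m+1), ∑ i : Fin m,
      (u i * M (Fin.last m) j) * cofactor M i.castSucc j = 0 := by
    simp_rw [mul_assoc]
    rw [Finset.sum_comm]
    simp_rw [← Finset.mul_sum, sum_mul_cofactor]
    have : ∀ i : Fin m, Fin.last m ≠ i.castSucc := fun i =>
      (Fin.castSucc_lt_last i).ne'
    simp [this]
  rw [T1, T2, add_zero]
end
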